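/- Let $B^* \subset \mathbb{R}^k$ be a bounded open set, $M > 1$, $R > 0$. Then the class $\mathscr{C}_{M,R}$ equipped with the Hausdorff complementary distance $\rho$ is a compact metric space: every sequence $(\Omega_m) \subset \mathscr{C}_{M,R}$ has a subsequence converging in $\rho$ to some $\Omega \in \mathscr{C}_{M,R}$. -/

import Mathlib

open Metric Filter

/-- A point outside an open set can be joined to a point inside only through the frontier. -/
lemma aux_frontier_hit {E : Type*} [NormedAddCommGroup E] [NormedSpace ℝ E]
    {U : Set E} (hU : IsOpen U) {x w : E} (hx : x ∈ U) (hw : w ∉ U) :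
    ∃ p ∈ frontier U, dist x p ≤ dist x w := by
  by_cases hwc : w ∈ closure U
  · exact ⟨w, ⟨hwc, by rwa [hU.interior_eq]⟩, le_refl _⟩
  · by_contra h
    push_neg at h
    have hseg : segment ℝ x w ⊆ U ∪ (closure U)ᶜ := by
      intro p hp
      by_cases hpU : p ∈ U
      · exact Or.inl hpU
      · refine Or.inr fun hpc => ?_
        have hpf : p ∈ frontier U := ⟨hpc, by rwa [hU.interior_eq]⟩
        have hle : dist x p ≤ dist x w := by
          have := dist_add_dist_of_mem_segment hp
          nlinarith [dist_nonneg (x := p) (y := w)]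
        exact absurd hle (not_le.mpr (h p hpf))
    have hcon := (convex_segment x w).isPreconnected
    have := hcon U (closure U)ᶜ hU isClosed_closure.isOpen_compl hseg
      ⟨x, left_mem_segment ℝ x w, hx⟩ ⟨w, right_mem_segment ℝ x w, hwc⟩
    obtain ⟨q, _, hqU, hqc⟩ := this
    exact hqc (subset_closure hqU)

/-- For `x` in an open set `U`, the distance to the frontier equals the distance to any
set `C` squeezed between the frontier and the complement. -/
lemma aux_infDist_frontier {E : Type*} [NormedAddCommGroup E] [NormedSpace ℝ E]
    {U C : Set E} (hU : IsOpen U) (hfr : frontier U ⊆ C) (hC : ∀ p ∈ C, p ∉ U)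
    (hCne : C.Nonempty) {x : E} (hx : x ∈ U) :
    infDist x (frontier U) = infDist x C := by
  have hfrne : (frontier U).Nonempty := by
    obtain ⟨c, hc⟩ := hCne
    obtain ⟨p, hp, _⟩ := aux_frontier_hit hU hx (hC c hc)
    exact ⟨p, hp⟩
  refine le_antisymm ?_ (infDist_le_infDist_of_subset hfr hfrne)
  by_contra h
  push_neg at h
  obtain ⟨w, hw, hwd⟩ := (infDist_lt_iff hCne).mp h
  obtain ⟨p, hp, hle⟩ := aux_frontier_hit hU hx (hC w hw)
  exact absurd (le_trans (infDist_le_dist_of_mem hp) hle) (not_le.mpr hwd)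

/-- A Hausdorff limit of preconnected compact sets is preconnected. -/
lemma aux_preconnected_limit {E : Type*} [MetricSpace E] {Ks : ℕ → Set E} {L : Set E}
    (hLc : IsCompact L) (hLne : L.Nonempty)
    (hne : ∀ n, (Ks n).Nonempty) (hconn : ∀ n, IsPreconnected (Ks n))
    (hfin : ∀ n, EMetric.hausdorffEdist (Ks n) L ≠ ⊤)
    (htend : Filter.Tendsto (fun n => hausdorffDist (Ks n) L) atTop (nhds 0)) :
    IsPreconnected L := by
  intro u v hu hv hcov h1 h2
  by_contra hempty
  rw [Set.not_nonempty_iff_eq_empty] at hempty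
  set A := L \ v with hA
  set B := L \ u with hB
  have hAc : IsCompact A := hLc.diff hv
  have hBc : IsCompact B := hLc.diff hu
  have hAne : A.Nonempty := by
    obtain ⟨a, haL, hau⟩ := h1
    refine ⟨a, haL, fun hav => ?_⟩
    exact absurd (Set.mem_inter haL (Set.mem_inter hau hav)) (by rw [hempty]; exact Set.notMem_empty a)
  have hBne : B.Nonempty := by
    obtain ⟨b, hbL, hbv⟩ := h2
    refine ⟨b, hbL, fun hbu => ?_⟩
    exact absurd (Set.mem_inter hbL (Set.mem_inter hbu hbv)) (by rw [hempty]; exact Set.notMem_empty b)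
  have hdisj : Disjoint A B := by
    rw [Set.disjoint_left]
    rintro p ⟨hpL, hpv⟩ ⟨_, hpu⟩
    rcases hcov hpL with h | h
    exacts [hpu h, hpv h]
  obtain ⟨δ, hδ, hTdisj⟩ := hdisj.exists_thickenings hAc hBc.isClosed
  have hev : ∀ᶠ n in atTop, hausdorffDist (Ks n) L < δ :=
    htend.eventually (gt_mem_nhds hδ)
  obtain ⟨n, hn⟩ := hev.exists
  -- Ks n is covered by the two disjoint open thickenings
  have hKcov : Ks n ⊆ thickening δ A ∪ thickening δ B := by
    intro p hp
    have h1' : infDist p L ≤ hausdorffDist (Ks n) L :=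
      infDist_le_hausdorffDist_of_mem hp (hfin n)
    have : infDist p L < δ := lt_of_le_of_lt h1' hn
    obtain ⟨q, hqL, hq⟩ := (infDist_lt_iff hLne).mp this
    have hqAB : q ∈ A ∪ B := by
      rcases hcov hqL with h | h
      · left; refine ⟨hqL, fun hqv => ?_⟩
        exact absurd (Set.mem_inter hqL (Set.mem_inter h hqv)) (by rw [hempty]; exact Set.notMem_empty q)
      · right; refine ⟨hqL, fun hqu => ?_⟩
        exact absurd (Set.mem_inter hqL (Set.mem_inter hqu h)) (by rw [hempty]; exact Set.notMem_empty q)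
    rcases hqAB with h | h
    · exact Or.inl (mem_thickening_iff.mpr ⟨q, h, hq⟩)
    · exact Or.inr (mem_thickening_iff.mpr ⟨q, h, hq⟩)
  have hKA : (Ks n ∩ thickening δ A).Nonempty := by
    obtain ⟨a, ha⟩ := hAne
    have hfin' : EMetric.hausdorffEdist L (Ks n) ≠ ⊤ := by
      exact ne_of_eq_of_ne EMetric.hausdorffEdist_comm (hfin n)
    have : infDist a (Ks n) ≤ hausdorffDist L (Ks n) :=
      infDist_le_hausdorffDist_of_mem ha.1 hfin'
    rw [hausdorffDist_comm] at this
    obtain ⟨p, hpK, hpd⟩ := (infDist_lt_iff (hne n)).mp (lt_of_le_of_lt this hn)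
    exact ⟨p, hpK, mem_thickening_iff.mpr ⟨a, ha, by rwa [dist_comm]⟩⟩
  have hKB : (Ks n ∩ thickening δ B).Nonempty := by
    obtain ⟨b, hb⟩ := hBne
    have hfin' : EMetric.hausdorffEdist L (Ks n) ≠ ⊤ := by
      exact ne_of_eq_of_ne EMetric.hausdorffEdist_comm (hfin n)
    have : infDist b (Ks n) ≤ hausdorffDist L (Ks n) :=
      infDist_le_hausdorffDist_of_mem hb.1 hfin'
    rw [hausdorffDist_comm] at this
    obtain ⟨p, hpK, hpd⟩ := (infDist_lt_iff (hne n)).mp (lt_of_le_of_lt this hn)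
    exact ⟨p, hpK, mem_thickening_iff.mpr ⟨b, hb, by rwa [dist_comm]⟩⟩
  obtain ⟨p, _, hpA, hpB⟩ := hconn n (thickening δ A) (thickening δ B)
    isOpen_thickening isOpen_thickening hKcov hKA hKB
  exact Set.disjoint_left.mp hTdisj hpA hpB

open TopologicalSpace in
/-- Blaschke-type selection: from a sequence of nonempty compact subsets of a fixed compact
set, extract a subsequence converging in Hausdorff distance. -/
lemma aux_blaschke {E : Type*} [MetricSpace E] {X : Set E} (hX : IsCompact X)
    (A : ℕ → Set E) (hAc : ∀ n, IsCompact (A n)) (hAne : ∀ n, (A n).Nonempty)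
    (hAX : ∀ n, A n ⊆ X) :
    ∃ L : Set E, IsCompact L ∧ L.Nonempty ∧ L ⊆ X ∧
      ∃ ψ : ℕ → ℕ, StrictMono ψ ∧
        Filter.Tendsto (fun n => hausdorffDist (A (ψ n)) L) atTop (nhds 0) := by
  haveI : CompactSpace ↥X := isCompact_iff_compactSpace.mp hX
  have hGc : ∀ n, IsCompact ((↑) ⁻¹' A n : Set ↥X) := fun n =>
    ((hAc n).isClosed.preimage continuous_subtype_val).isCompact
  have hGne : ∀ n, ((↑) ⁻¹' A n : Set ↥X).Nonempty := fun n => by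
    obtain ⟨a, ha⟩ := hAne n
    exact ⟨⟨a, hAX n ha⟩, ha⟩
  set G : ℕ → NonemptyCompacts ↥X := fun n => ⟨⟨(↑) ⁻¹' A n, hGc n⟩, hGne n⟩ with hG
  obtain ⟨L0, ψ, hψ, htend⟩ := CompactSpace.tendsto_subseq G
  refine ⟨(↑) '' (L0 : Set ↥X), L0.isCompact.image continuous_subtype_val,
    L0.nonempty.image _, ?_, ψ, hψ, ?_⟩
  · rintro p ⟨q, _, rfl⟩; exact q.2
  · have h0 : Filter.Tendsto (fun n => dist (G (ψ n)) L0) atTop (nhds 0) :=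
      tendsto_iff_dist_tendsto_zero.mp htend
    have key : ∀ n, dist (G n) L0 = hausdorffDist (A n) ((↑) '' (L0 : Set ↥X)) := by
      intro n
      rw [NonemptyCompacts.dist_eq]
      have himg := hausdorffDist_image (Φ := ((↑) : ↥X → E))
        (s := ((↑) ⁻¹' A n : Set ↥X)) (t := (L0 : Set ↥X)) isometry_subtype_coe
      have hGn : ((G n : Set ↥X)) = Subtype.val ⁻¹' A n := rfl
      rw [hGn, ← himg]
      congr 1
      rw [Subtype.image_preimage_coe, Set.inter_eq_self_of_subset_right (hAX n)]
    simpa only [key] using h0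

lemma aux_frontier_sub {α : Type*} [TopologicalSpace α] {U S : Set α} (hU : IsOpen U)
    (hUS : U ⊆ S) : frontier U ⊆ closure S \ U := by
  rw [hU.frontier_eq]
  exact fun p hp => ⟨closure_mono hUS hp.1, hp.2⟩

/-- Property `(C_M)`. -/
def PropertyCM {k : ℕ} (M : ℝ) (Ω : Set (EuclideanSpace ℝ (Fin k))) : Prop :=
  ∀ x ∈ Ω, ∀ y ∈ Ω, ∃ K : Set (EuclideanSpace ℝ (Fin k)),
    IsCompact K ∧ IsConnected K ∧ x ∈ K ∧ y ∈ K ∧ K ⊆ Ω ∧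
    ∀ z ∈ K, ball z (min (infDist x (frontier Ω)) (infDist y (frontier Ω)) / M) ⊆ Ω

/-- The class `𝒞_{M,R}`. -/
def ClassCMR {k : ℕ} (M R : ℝ) (Bstar Ω : Set (EuclideanSpace ℝ (Fin k))) : Prop :=
  IsOpen Ω ∧ Ω ⊆ Bstar ∧ (∃ xΩ, ball xΩ R ⊆ Ω) ∧ PropertyCM M Ω

/-- Theorem 2.1: `𝒞_{M,R}` is compact for the Hausdorff complementary distance. -/
theorem stmt11 {k : ℕ} (Bstar : Set (EuclideanSpace ℝ (Fin k)))
    (hBo : IsOpen Bstar) (hBb : Bornology.IsBounded Bstar)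
    (M R : ℝ) (hM : 1 < M) (hR : 0 < R)
    (Ωm : ℕ → Set (EuclideanSpace ℝ (Fin k)))
    (hΩm : ∀ m, ClassCMR M R Bstar (Ωm m)) :
    ∃ Ω : Set (EuclideanSpace ℝ (Fin k)), ClassCMR M R Bstar Ω ∧
      ∃ φ : ℕ → ℕ, StrictMono φ ∧
        Tendsto (fun j => hausdorffDist (closure Bstar \ Ωm (φ j)) (closure Bstar \ Ω))
          atTop (nhds 0) := by
  classical
  by_cases hsub : Subsingleton (EuclideanSpace ℝ (Fin k))
  · refine ⟨Ωm 0, hΩm 0, id, strictMono_id, ?_⟩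
    have h1 : ∀ m, closure Bstar \ Ωm m = ∅ := by
      intro m
      obtain ⟨-, -, ⟨x0, hx0⟩, -⟩ := hΩm m
      have hx0m : x0 ∈ Ωm m := hx0 (mem_ball_self hR)
      have : Ωm m = Set.univ := Set.eq_univ_of_forall fun y => (Subsingleton.elim y x0) ▸ hx0m
      rw [this, Set.diff_univ]
    simp only [id_eq, h1, hausdorffDist_empty]
    exact tendsto_const_nhds
  · haveI hnt : Nontrivial (EuclideanSpace ℝ (Fin k)) := not_subsingleton_iff_nontrivial.mp hsub
    have hM0 : (0 : ℝ) < M := lt_trans one_pos hM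
    have hBne : Bstar.Nonempty := by
      obtain ⟨-, hsub1, ⟨x0, hx0⟩, -⟩ := hΩm 0
      exact ⟨x0, hsub1 (hx0 (mem_ball_self hR))⟩
    have hXc : IsCompact (closure Bstar) := hBb.isCompact_closure
    have hXb : Bornology.IsBounded (closure Bstar) := hBb.closure
    have hBuniv : Bstar ≠ Set.univ := fun h => NormedSpace.unbounded_univ ℝ _ (h ▸ hBb)
    have hfrne : (frontier Bstar).Nonempty := nonempty_frontier_iff.mpr ⟨hBne, hBuniv⟩
    set F : ℕ → Set (EuclideanSpace ℝ (Fin k)) := fun m => closure Bstar \ Ωm m with hF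
    have hfrF : ∀ m, frontier Bstar ⊆ F m := by
      intro m p hp
      rw [hBo.frontier_eq] at hp
      exact ⟨hp.1, fun hpm => hp.2 ((hΩm m).2.1 hpm)⟩
    have hFc : ∀ m, IsCompact (F m) := fun m => hXc.diff (hΩm m).1
    have hFne : ∀ m, (F m).Nonempty := fun m => hfrne.mono (hfrF m)
    have hFX : ∀ m, F m ⊆ closure Bstar := fun m => Set.diff_subset
    obtain ⟨Fs, hFsc, hFsne, hFsX, φ₁, hφ₁, hconv₁⟩ := aux_blaschke hXc F hFc hFne hFX
    -- centers of the balls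
    choose xc hxc using fun m => (hΩm m).2.2.1
    have hxcB : ∀ m, xc m ∈ closure Bstar := fun m =>
      subset_closure ((hΩm m).2.1 (hxc m (mem_ball_self hR)))
    obtain ⟨xinf, -, φ₂, hφ₂, hxlim⟩ :=
      hXc.tendsto_subseq (x := fun n => xc (φ₁ n)) (fun n => hxcB _)
    have hconv : Tendsto (fun n => hausdorffDist (F (φ₁ (φ₂ n))) Fs) atTop (nhds 0) := by
      have := hconv₁.comp hφ₂.tendsto_atTop
      exact this
    -- the candidate limit domain
    set Ω : Set (EuclideanSpace ℝ (Fin k)) := Bstar \ Fs with hΩdef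
    have hΩo : IsOpen Ω := hBo.sdiff hFsc.isClosed
    have hΩB : Ω ⊆ Bstar := Set.diff_subset
    have hfin : ∀ s t : Set (EuclideanSpace ℝ (Fin k)), s.Nonempty → t.Nonempty →
        s ⊆ closure Bstar → t ⊆ closure Bstar → EMetric.hausdorffEdist s t ≠ ⊤ :=
      fun s t h1 h2 h3 h4 =>
        hausdorffEdist_ne_top_of_nonempty_of_bounded h1 h2 (hXb.subset h3) (hXb.subset h4)
    have hfinF : ∀ n, EMetric.hausdorffEdist (F (φ₁ (φ₂ n))) Fs ≠ ⊤ := fun n =>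
      hfin _ _ (hFne _) hFsne (hFX _) hFsX
    -- identification of the complement of Ω
    have hcompl : closure Bstar \ Ω = Fs := by
      apply Set.Subset.antisymm
      · rintro p ⟨hpX, hpn⟩
        by_cases hpB : p ∈ Bstar
        · by_contra hpFs
          exact hpn ⟨hpB, hpFs⟩
        · have hpF : ∀ m, p ∈ F m := fun m => ⟨hpX, fun hpm => hpB ((hΩm m).2.1 hpm)⟩
          have hle : ∀ n, infDist p Fs ≤ hausdorffDist (F (φ₁ (φ₂ n))) Fs := fun n =>
            infDist_le_hausdorffDist_of_mem (hpF _) (hfinF n)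
          have h0 : infDist p Fs ≤ 0 := ge_of_tendsto' hconv hle
          exact (hFsc.isClosed.mem_iff_infDist_zero hFsne).mpr (le_antisymm h0 infDist_nonneg)
      · intro p hp
        exact ⟨hFsX hp, fun hpΩ => hpΩ.2 hp⟩
    -- the limit ball
    have hballΩ : ball xinf R ⊆ Ω := by
      intro z hz
      rw [mem_ball] at hz
      set r := (R - dist z xinf) / 2 with hrdef
      have hr0 : 0 < r := by rw [hrdef]; linarith
      have hev1 : ∀ᶠ n in atTop, dist (xc (φ₁ (φ₂ n))) xinf < r :=
        (tendsto_iff_dist_tendsto_zero.mp hxlim).eventually (gt_mem_nhds hr0)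
      have hev2 : ∀ᶠ n in atTop, hausdorffDist (F (φ₁ (φ₂ n))) Fs < r :=
        hconv.eventually (gt_mem_nhds hr0)
      obtain ⟨n, hn1, hn2⟩ := (hev1.and hev2).exists
      have hballn : ∀ w, dist w z < r → w ∈ Ωm (φ₁ (φ₂ n)) := by
        intro w hw
        apply hxc (φ₁ (φ₂ n))
        rw [mem_ball]
        have h4 := dist_triangle4 w z xinf (xc (φ₁ (φ₂ n)))
        rw [dist_comm xinf (xc (φ₁ (φ₂ n)))] at h4
        have hzx : dist z xinf = R - 2 * r := by rw [hrdef]; ring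
        linarith
      refine ⟨(hΩm (φ₁ (φ₂ n))).2.1 (hballn z (by simpa using hr0)), ?_⟩
      intro hzFs
      have h1 : infDist z (F (φ₁ (φ₂ n))) ≤ hausdorffDist Fs (F (φ₁ (φ₂ n))) :=
        infDist_le_hausdorffDist_of_mem hzFs (by rw [EMetric.hausdorffEdist_comm]; exact hfinF n)
      rw [hausdorffDist_comm] at h1
      obtain ⟨w, hwF, hwd⟩ := (infDist_lt_iff (hFne _)).mp (lt_of_le_of_lt h1 hn2)
      exact hwF.2 (hballn w (by rwa [dist_comm] at hwd))
    -- the frontier distance identification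
    have hfreq : ∀ w ∈ Ω, infDist w (frontier Ω) = infDist w Fs := by
      intro w hw
      refine aux_infDist_frontier hΩo ?_ ?_ hFsne hw
      · intro p hp
        rw [← hcompl]; exact aux_frontier_sub hΩo hΩB hp
      · intro p hpFs hpΩ; exact hpΩ.2 hpFs
    have hfreqm : ∀ m, ∀ w ∈ Ωm m, infDist w (frontier (Ωm m)) = infDist w (F m) := by
      intro m w hw
      refine aux_infDist_frontier (hΩm m).1 ?_ ?_ (hFne m) hw
      · exact aux_frontier_sub (hΩm m).1 (hΩm m).2.1
      · intro p hpF hpΩ; exact hpF.2 hpΩ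
    -- Property (C_M) for Ω
    have hCM : PropertyCM M Ω := by
      intro x hx y hy
      set dx := infDist x Fs with hdx
      set dy := infDist y Fs with hdy
      set d := min dx dy with hd
      have hdx0 : 0 < dx := (hFsc.isClosed.notMem_iff_infDist_pos hFsne).mp hx.2
      have hdy0 : 0 < dy := (hFsc.isClosed.notMem_iff_infDist_pos hFsne).mp hy.2
      have hd0 : 0 < d := lt_min hdx0 hdy0
      obtain ⟨N, hN⟩ := eventually_atTop.mp (hconv.eventually (gt_mem_nhds (half_pos hd0)))
      have hxB : x ∈ Bstar := hx.1
      have hyB : y ∈ Bstar := hy.1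
      have hxym : ∀ n, x ∈ Ωm (φ₁ (φ₂ (N + n))) ∧ y ∈ Ωm (φ₁ (φ₂ (N + n))) := by
        intro n
        have hh := hN (N + n) (Nat.le_add_right N n)
        constructor
        · by_contra hxm
          have hxF : x ∈ F (φ₁ (φ₂ (N + n))) := ⟨subset_closure hxB, hxm⟩
          have h1 : infDist x Fs ≤ hausdorffDist (F (φ₁ (φ₂ (N + n)))) Fs :=
            infDist_le_hausdorffDist_of_mem hxF (hfinF _)
          have h2 : d ≤ dx := min_le_left _ _
          rw [← hdx] at h1
          linarith
        · by_contra hym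
          have hyF : y ∈ F (φ₁ (φ₂ (N + n))) := ⟨subset_closure hyB, hym⟩
          have h1 : infDist y Fs ≤ hausdorffDist (F (φ₁ (φ₂ (N + n)))) Fs :=
            infDist_le_hausdorffDist_of_mem hyF (hfinF _)
          have h2 : d ≤ dy := min_le_right _ _
          rw [← hdy] at h1
          linarith
      choose K hK using fun n => (hΩm (φ₁ (φ₂ (N + n)))).2.2.2 x (hxym n).1 y (hxym n).2
      have hxK : ∀ n, x ∈ K n := fun n => (hK n).2.2.1
      have hyK : ∀ n, y ∈ K n := fun n => (hK n).2.2.2.1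
      have hKΩ : ∀ n, K n ⊆ Ωm (φ₁ (φ₂ (N + n))) := fun n => (hK n).2.2.2.2.1
      have hKX : ∀ n, K n ⊆ closure Bstar := fun n =>
        (hKΩ n).trans ((hΩm _).2.1.trans subset_closure)
      obtain ⟨L, hLc, hLne, hLX, ψ, hψ, hLconv⟩ :=
        aux_blaschke hXc K (fun n => (hK n).1) (fun n => ⟨x, hxK n⟩) hKX
      have hfinK : ∀ j, EMetric.hausdorffEdist (K (ψ j)) L ≠ ⊤ := fun j =>
        hfin _ _ ⟨x, hxK _⟩ hLne (hKX _) hLX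
      have hεψ : Tendsto (fun j => hausdorffDist (F (φ₁ (φ₂ (N + ψ j)))) Fs) atTop (nhds 0) := by
        have := hconv.comp (tendsto_atTop_mono (fun j => Nat.le_add_left (ψ j) N) hψ.tendsto_atTop)
        exact this
      have hd' : ∀ n, d - hausdorffDist (F (φ₁ (φ₂ (N + n)))) Fs ≤
          min (infDist x (frontier (Ωm (φ₁ (φ₂ (N + n))))))
              (infDist y (frontier (Ωm (φ₁ (φ₂ (N + n)))))) := by
        intro n
        rw [hfreqm _ x (hxym n).1, hfreqm _ y (hxym n).2]
        have hx' : infDist x Fs ≤ infDist x (F (φ₁ (φ₂ (N + n)))) +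
            hausdorffDist (F (φ₁ (φ₂ (N + n)))) Fs :=
          infDist_le_infDist_add_hausdorffDist (hfinF _)
        have hy' : infDist y Fs ≤ infDist y (F (φ₁ (φ₂ (N + n)))) +
            hausdorffDist (F (φ₁ (φ₂ (N + n)))) Fs :=
          infDist_le_infDist_add_hausdorffDist (hfinF _)
        rw [← hdx] at hx'
        rw [← hdy] at hy'
        refine le_min ?_ ?_
        · have := min_le_left dx dy; rw [← hd] at this; linarith
        · have := min_le_right dx dy; rw [← hd] at this; linarith
      -- the key ball property of L
      have hkey : ∀ z ∈ L, ∀ w, dist w z < d / M → w ∈ Ω := by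
        intro z hz w hw
        set r := d / M - dist w z with hrdef
        have hr0 : 0 < r := by rw [hrdef]; linarith
        have hr40 : 0 < r / 4 := by linarith
        have hev1 : ∀ᶠ j in atTop, hausdorffDist (K (ψ j)) L < r / 4 :=
          hLconv.eventually (gt_mem_nhds hr40)
        have hev2 : ∀ᶠ j in atTop, hausdorffDist (F (φ₁ (φ₂ (N + ψ j)))) Fs < r / 4 :=
          hεψ.eventually (gt_mem_nhds hr40)
        obtain ⟨j, hj1, hj2⟩ := (hev1.and hev2).exists
        have h1 : infDist z (K (ψ j)) ≤ hausdorffDist L (K (ψ j)) :=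
          infDist_le_hausdorffDist_of_mem hz (by rw [EMetric.hausdorffEdist_comm]; exact hfinK j)
        rw [hausdorffDist_comm] at h1
        obtain ⟨zn, hznK, hznd⟩ := (infDist_lt_iff ⟨x, hxK _⟩).mp (lt_of_le_of_lt h1 hj1)
        have hdmin := hd' (ψ j)
        have hε0 : (0:ℝ) ≤ hausdorffDist (F (φ₁ (φ₂ (N + ψ j)))) Fs := hausdorffDist_nonneg
        set d' := min (infDist x (frontier (Ωm (φ₁ (φ₂ (N + ψ j))))))
            (infDist y (frontier (Ωm (φ₁ (φ₂ (N + ψ j)))))) with hd'def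
        have hd'M : d / M - r / 4 < d' / M := by
          have h2 : (d - hausdorffDist (F (φ₁ (φ₂ (N + ψ j)))) Fs) / M ≤ d' / M :=
            (div_le_div_iff_of_pos_right hM0).mpr hdmin
          have h3 : (d - hausdorffDist (F (φ₁ (φ₂ (N + ψ j)))) Fs) / M =
              d / M - hausdorffDist (F (φ₁ (φ₂ (N + ψ j)))) Fs / M := sub_div _ _ _
          have hεM : hausdorffDist (F (φ₁ (φ₂ (N + ψ j)))) Fs / M ≤
              hausdorffDist (F (φ₁ (φ₂ (N + ψ j)))) Fs := by
            rw [div_le_iff₀ hM0]; nlinarith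
          linarith
        have hwzn : dist w zn < d / M - 3 * (r / 4) := by
          have ht := dist_triangle w z zn
          have : dist w z = d / M - r := by rw [hrdef]; ring
          linarith
        have hwball : w ∈ ball zn (d' / M) := by rw [mem_ball]; linarith
        have hwΩm : w ∈ Ωm (φ₁ (φ₂ (N + ψ j))) :=
          (hK (ψ j)).2.2.2.2.2 zn hznK hwball
        refine ⟨(hΩm _).2.1 hwΩm, ?_⟩
        intro hwFs
        have h2 : infDist w (F (φ₁ (φ₂ (N + ψ j)))) ≤
            hausdorffDist Fs (F (φ₁ (φ₂ (N + ψ j)))) :=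
          infDist_le_hausdorffDist_of_mem hwFs (by rw [EMetric.hausdorffEdist_comm]; exact hfinF _)
        rw [hausdorffDist_comm] at h2
        obtain ⟨w', hw'F, hw'd⟩ := (infDist_lt_iff (hFne _)).mp (lt_of_le_of_lt h2 hj2)
        have hw'ball : w' ∈ ball zn (d' / M) := by
          rw [mem_ball]
          have ht := dist_triangle w' w zn
          rw [dist_comm w' w] at ht
          linarith
        exact hw'F.2 ((hK (ψ j)).2.2.2.2.2 zn hznK hw'ball)
      -- membership of x and y in L
      have hmemL : ∀ p, (∀ n, p ∈ K n) → p ∈ L := by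
        intro p hp
        have hle : ∀ j, infDist p L ≤ hausdorffDist (K (ψ j)) L := fun j =>
          infDist_le_hausdorffDist_of_mem (hp _) (hfinK j)
        have h0 : infDist p L ≤ 0 := ge_of_tendsto' hLconv hle
        exact (hLc.isClosed.mem_iff_infDist_zero hLne).mpr (le_antisymm h0 infDist_nonneg)
      have hLΩ : L ⊆ Ω := fun z hz =>
        hkey z hz z (by simpa using div_pos hd0 hM0)
      refine ⟨L, hLc, ⟨hLne, ?_⟩, hmemL x hxK, hmemL y hyK, hLΩ, ?_⟩
      · exact aux_preconnected_limit hLc hLne (fun j => ⟨x, hxK (ψ j)⟩)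
          (fun j => ((hK (ψ j)).2.1).isPreconnected) hfinK hLconv
      · intro z hz w hw
        rw [mem_ball, hfreq x hx, hfreq y hy] at hw
        exact hkey z hz w hw
    refine ⟨Ω, ⟨hΩo, hΩB, ⟨xinf, hballΩ⟩, hCM⟩, φ₁ ∘ φ₂, hφ₁.comp hφ₂, ?_⟩
    have : (fun j => hausdorffDist (closure Bstar \ Ωm ((φ₁ ∘ φ₂) j)) (closure Bstar \ Ω)) =
        fun j => hausdorffDist (F (φ₁ (φ₂ j))) Fs := by
      funext j
      rw [hcompl]
      rfl
    rw [this]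
    exact hconv
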